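/- Let Λ = {λ_n} be an increasing sequence of positive numbers with λ_n → ∞ such that λ_n/n decreases to 0 and limsup_{n→∞} (λ_n · log n)/n = +∞. Then Λ#BV ⊄ HBV, i.e. there exists a 2π-periodic (in each variable) function f : ℝ² → ℝ with Λ#V₁(f) + Λ#V₂(f) < ∞ whose harmonic variation is infinite. -/

import Mathlib

open scoped ENNReal BigOperators
open Filter Set

noncomputable section

/-- A collection of `n` pairwise nonoverlapping subintervals of `T = [0, 2π]`,
given as pairs of endpoints. -/
def NonoverlapIcc (n : ℕ) (I : Fin n → ℝ × ℝ) : Prop :=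
  (∀ i, 0 ≤ (I i).1 ∧ (I i).1 < (I i).2 ∧ (I i).2 ≤ 2 * Real.pi) ∧
    ∀ i j, i ≠ j → (I i).2 ≤ (I j).1 ∨ (I j).2 ≤ (I i).1

/-- `f : ℝ² → ℝ` (curried) is `2π`-periodic in each variable. -/
def Periodic2 (f : ℝ → ℝ → ℝ) : Prop :=
  ∀ x y : ℝ, f (x + 2 * Real.pi) y = f x y ∧ f x (y + 2 * Real.pi) = f x y

/-- `ΛV₁(f)`: partial `Λ`-variation in the first variable. -/
def LamV1 (Λ : ℕ → ℝ) (f : ℝ → ℝ → ℝ) : ℝ≥0∞ :=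
  ⨆ (y ∈ Icc (0:ℝ) (2 * Real.pi)) (n : ℕ) (I : Fin n → ℝ × ℝ) (_ : NonoverlapIcc n I),
    ENNReal.ofReal (∑ i, |f (I i).2 y - f (I i).1 y| / Λ ((i : ℕ) + 1))

/-- `ΛV₂(f)`: partial `Λ`-variation in the second variable. -/
def LamV2 (Λ : ℕ → ℝ) (f : ℝ → ℝ → ℝ) : ℝ≥0∞ :=
  ⨆ (x ∈ Icc (0:ℝ) (2 * Real.pi)) (m : ℕ) (J : Fin m → ℝ × ℝ) (_ : NonoverlapIcc m J),
    ENNReal.ofReal (∑ j, |f x (J j).2 - f x (J j).1| / Λ ((j : ℕ) + 1))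

/-- `ΛV₁,₂(f)`: mixed `Λ`-variation. -/
def LamV12 (Λ : ℕ → ℝ) (f : ℝ → ℝ → ℝ) : ℝ≥0∞ :=
  ⨆ (n : ℕ) (m : ℕ) (I : Fin n → ℝ × ℝ) (J : Fin m → ℝ × ℝ)
    (_ : NonoverlapIcc n I) (_ : NonoverlapIcc m J),
    ENNReal.ofReal (∑ i, ∑ j,
      |f (I i).1 (J j).1 - f (I i).1 (J j).2 - f (I i).2 (J j).1 + f (I i).2 (J j).2| /
        (Λ ((i : ℕ) + 1) * Λ ((j : ℕ) + 1)))

/-- Total harmonic variation `HV(f) = HV₁(f) + HV₂(f) + HV₁,₂(f)` (with `λ_n = n`).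
`f ∈ HBV` iff `HarmonicV f ≠ ⊤`. -/
def HarmonicV (f : ℝ → ℝ → ℝ) : ℝ≥0∞ :=
  LamV1 (fun n => (n : ℝ)) f + LamV2 (fun n => (n : ℝ)) f + LamV12 (fun n => (n : ℝ)) f

/-- `Λ#V₁(f)`. -/
def LamSharpV1 (Λ : ℕ → ℝ) (f : ℝ → ℝ → ℝ) : ℝ≥0∞ :=
  ⨆ (n : ℕ) (I : Fin n → ℝ × ℝ) (y : Fin n → ℝ)
    (_ : NonoverlapIcc n I) (_ : ∀ i, y i ∈ Icc (0:ℝ) (2 * Real.pi)),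
    ENNReal.ofReal (∑ i, |f (I i).2 (y i) - f (I i).1 (y i)| / Λ ((i : ℕ) + 1))

/-- `Λ#V₂(f)`. -/
def LamSharpV2 (Λ : ℕ → ℝ) (f : ℝ → ℝ → ℝ) : ℝ≥0∞ :=
  ⨆ (m : ℕ) (J : Fin m → ℝ × ℝ) (x : Fin m → ℝ)
    (_ : NonoverlapIcc m J) (_ : ∀ j, x j ∈ Icc (0:ℝ) (2 * Real.pi)),
    ENNReal.ofReal (∑ j, |f (x j) (J j).2 - f (x j) (J j).1| / Λ ((j : ℕ) + 1))

/-- A collection of `n` pairwise nonoverlapping rectangles `[α,β] × [γ,δ] ⊆ T²`,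
encoded as `((α, β), (γ, δ))`. -/
def NonoverlapRect (n : ℕ) (A : Fin n → (ℝ × ℝ) × (ℝ × ℝ)) : Prop :=
  (∀ k, 0 ≤ (A k).1.1 ∧ (A k).1.1 < (A k).1.2 ∧ (A k).1.2 ≤ 2 * Real.pi ∧
        0 ≤ (A k).2.1 ∧ (A k).2.1 < (A k).2.2 ∧ (A k).2.2 ≤ 2 * Real.pi) ∧
    ∀ k l, k ≠ l →
      Disjoint (Ioo (A k).1.1 (A k).1.2 ×ˢ Ioo (A k).2.1 (A k).2.2)
        (Ioo (A l).1.1 (A l).1.2 ×ˢ Ioo (A l).2.1 (A l).2.2)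

/-- `Λ*V(f)` of Dyachenko–Waterman. -/
def LamStarV (Λ : ℕ → ℝ) (f : ℝ → ℝ → ℝ) : ℝ≥0∞ :=
  ⨆ (n : ℕ) (A : Fin n → (ℝ × ℝ) × (ℝ × ℝ)) (_ : NonoverlapRect n A),
    ENNReal.ofReal (∑ k,
      |f (A k).1.1 (A k).2.1 - f (A k).1.1 (A k).2.2 -
        f (A k).1.2 (A k).2.1 + f (A k).1.2 (A k).2.2| / Λ ((k : ℕ) + 1))

/-- Partial `p`-variation (first variable); with `Φ(u) = u^p`. -/
def PV1pow (p : ℝ) (f : ℝ → ℝ → ℝ) : ℝ≥0∞ :=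
  ⨆ (y ∈ Icc (0:ℝ) (2 * Real.pi)) (n : ℕ) (I : Fin n → ℝ × ℝ) (_ : NonoverlapIcc n I),
    ENNReal.ofReal (∑ i, |f (I i).2 y - f (I i).1 y| ^ p)

/-- Partial `p`-variation (second variable). -/
def PV2pow (p : ℝ) (f : ℝ → ℝ → ℝ) : ℝ≥0∞ :=
  ⨆ (x ∈ Icc (0:ℝ) (2 * Real.pi)) (m : ℕ) (J : Fin m → ℝ × ℝ) (_ : NonoverlapIcc m J),
    ENNReal.ofReal (∑ j, |f x (J j).2 - f x (J j).1| ^ p)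

/-- `V#_{Φ,1}(f)` for the class `B#V_Φ`. -/
def PhiSharpV1 (Φ : ℝ → ℝ) (f : ℝ → ℝ → ℝ) : ℝ≥0∞ :=
  ⨆ (n : ℕ) (I : Fin n → ℝ × ℝ) (y : Fin n → ℝ)
    (_ : NonoverlapIcc n I) (_ : ∀ i, y i ∈ Icc (0:ℝ) (2 * Real.pi)),
    ENNReal.ofReal (∑ i, Φ |f (I i).2 (y i) - f (I i).1 (y i)|)

/-- `V#_{Φ,2}(f)` for the class `B#V_Φ`. -/
def PhiSharpV2 (Φ : ℝ → ℝ) (f : ℝ → ℝ → ℝ) : ℝ≥0∞ :=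
  ⨆ (m : ℕ) (J : Fin m → ℝ × ℝ) (x : Fin m → ℝ)
    (_ : NonoverlapIcc m J) (_ : ∀ j, x j ∈ Icc (0:ℝ) (2 * Real.pi)),
    ENNReal.ofReal (∑ j, Φ |f (x j) (J j).2 - f (x j) (J j).1|)

/-- Partial modulus of variation `v₁(n, f)`. -/
def modV1 (f : ℝ → ℝ → ℝ) (n : ℕ) : ℝ≥0∞ :=
  ⨆ (y ∈ Icc (0:ℝ) (2 * Real.pi)) (I : Fin n → ℝ × ℝ) (_ : NonoverlapIcc n I),
    ENNReal.ofReal (∑ i, |f (I i).2 y - f (I i).1 y|)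

/-- Partial modulus of variation `v₂(m, f)`. -/
def modV2 (f : ℝ → ℝ → ℝ) (m : ℕ) : ℝ≥0∞ :=
  ⨆ (x ∈ Icc (0:ℝ) (2 * Real.pi)) (J : Fin m → ℝ × ℝ) (_ : NonoverlapIcc m J),
    ENNReal.ofReal (∑ j, |f x (J j).2 - f x (J j).1|)

/-- `v₁#(n, f)`. -/
def modSharpV1 (f : ℝ → ℝ → ℝ) (n : ℕ) : ℝ≥0∞ :=
  ⨆ (I : Fin n → ℝ × ℝ) (y : Fin n → ℝ)
    (_ : NonoverlapIcc n I) (_ : ∀ i, y i ∈ Icc (0:ℝ) (2 * Real.pi)),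
    ENNReal.ofReal (∑ i, |f (I i).2 (y i) - f (I i).1 (y i)|)

/-- `v₂#(m, f)`. -/
def modSharpV2 (f : ℝ → ℝ → ℝ) (m : ℕ) : ℝ≥0∞ :=
  ⨆ (J : Fin m → ℝ × ℝ) (x : Fin m → ℝ)
    (_ : NonoverlapIcc m J) (_ : ∀ j, x j ∈ Icc (0:ℝ) (2 * Real.pi)),
    ENNReal.ofReal (∑ j, |f (x j) (J j).2 - f (x j) (J j).1|)

/-- The shifted sequence `Λ_n = {λ_k}_{k=n}^∞`: its `i`-th member (`i ≥ 1`) is `λ_{n+i-1}`. -/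
def ShiftSeq (Λ : ℕ → ℝ) (n : ℕ) : ℕ → ℝ := fun k => Λ (k + n - 1)

/-- The sequence `λ_n = n / log n` (for `n ≥ 2`; the value at `n ≤ 1` is irrelevant). -/
def nlogSeq : ℕ → ℝ := fun n => if n ≤ 1 then 1 else (n : ℝ) / Real.log n

/-- Double Fourier coefficient
`f̂(m,n) = (1/(4π²)) ∫₀^{2π}∫₀^{2π} f(x,y) e^{-imx} e^{-iny} dx dy`. -/
def fCoef (f : ℝ → ℝ → ℝ) (m n : ℤ) : ℂ :=
  (4 * (Real.pi : ℂ) ^ 2)⁻¹ *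
    ∫ x in (0:ℝ)..(2 * Real.pi), ∫ y in (0:ℝ)..(2 * Real.pi),
      (f x y : ℂ) * Complex.exp (-(Complex.I * (m : ℂ) * (x : ℂ))) *
        Complex.exp (-(Complex.I * (n : ℂ) * (y : ℂ)))

/-- Rectangular partial sum `S_{M,N}[f,(x,y)]` of the double Fourier series. -/
def SRect (f : ℝ → ℝ → ℝ) (M N : ℕ) (x y : ℝ) : ℂ :=
  ∑ m ∈ Finset.Icc (-(M : ℤ)) (M : ℤ), ∑ n ∈ Finset.Icc (-(N : ℤ)) (N : ℤ),
    fCoef f m n * Complex.exp (Complex.I * (m : ℂ) * (x : ℂ)) *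
      Complex.exp (Complex.I * (n : ℂ) * (y : ℂ))

/-- One-sided punctured neighborhood filter: from the right if `s = true`,
from the left if `s = false`. -/
def sideF (x : ℝ) (s : Bool) : Filter ℝ :=
  if s then nhdsWithin x (Ioi x) else nhdsWithin x (Iio x)

/-- `HasQuadLim f x y s t L` means the open-quadrant limit of `f` at `(x,y)` from the
quadrant with horizontal direction `s` and vertical direction `t` exists and equals `L`
(e.g. `s = true, t = false` is `f(x+0, y-0)`). -/
def HasQuadLim (f : ℝ → ℝ → ℝ) (x y : ℝ) (s t : Bool) (L : ℝ) : Prop :=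
  Tendsto (fun p : ℝ × ℝ => f p.1 p.2) ((sideF x s) ×ˢ (sideF y t)) (nhds L)

/-- Cesàro numbers `A_k^α = (α+1)(α+2)⋯(α+k)/k!`. -/
def AA (α : ℝ) : ℕ → ℝ
  | 0 => 1
  | k + 1 => AA α k * (α + ((k : ℝ) + 1)) / ((k : ℝ) + 1)

/-- Cesàro `(C; α, β)` means of the double Fourier series of `f`. -/
def cesaro (f : ℝ → ℝ → ℝ) (α β : ℝ) (n m : ℕ) (x y : ℝ) : ℂ :=
  ((1 / (AA α n * AA β m) : ℝ) : ℂ) *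
    ∑ i ∈ Finset.range (n + 1), ∑ j ∈ Finset.range (m + 1),
      ((AA (α - 1) (n - i) * AA (β - 1) (m - j) : ℝ) : ℂ) * SRect f i j x y

end


namespace Stmt6Aux
noncomputable section
open Classical



/-! ### Harmonic sum bounds -/

lemma log_le_harm (n : ℕ) : Real.log (n + 1) ≤ ∑ k ∈ Finset.range n, 1 / ((k : ℝ) + 1) := by
  induction n with
  | zero => simp
  | succ n ih =>
    rw [Finset.sum_range_succ]
    have h1 : Real.log ((n:ℝ) + 1 + 1) = Real.log ((n:ℝ)+1) + Real.log (((n:ℝ)+1+1)/((n:ℝ)+1)) := by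
      rw [← Real.log_mul (by positivity) (by positivity)]
      congr 1
      field_simp
    have h2 : Real.log (((n:ℝ)+1+1)/((n:ℝ)+1)) ≤ 1 / ((n:ℝ)+1) := by
      have := Real.log_le_sub_one_of_pos (x := ((n:ℝ)+1+1)/((n:ℝ)+1)) (by positivity)
      have e : ((n:ℝ)+1+1)/((n:ℝ)+1) - 1 = 1/((n:ℝ)+1) := by field_simp; ring
      linarith [this, e.le]
    push_cast
    push_cast at ih
    linarith

lemma harm_le (n : ℕ) (hn : 1 ≤ n) :
    ∑ k ∈ Finset.range n, 1 / ((k : ℝ) + 1) ≤ 1 + Real.log n := by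
  induction n with
  | zero => omega
  | succ n ih =>
    rcases Nat.eq_zero_or_pos n with h0 | h0
    · subst h0; simp
    · rw [Finset.sum_range_succ]
      have ih' := ih h0
      have h2 : 1 / ((n:ℝ)+1) ≤ Real.log ((n:ℝ)+1) - Real.log n := by
        have hn1 : (0:ℝ) < n := by exact_mod_cast h0
        have h3 : Real.log ((n:ℝ)/((n:ℝ)+1)) ≤ (n:ℝ)/((n:ℝ)+1) - 1 :=
          Real.log_le_sub_one_of_pos (by positivity)
        have e : (n:ℝ)/((n:ℝ)+1) - 1 = -(1/((n:ℝ)+1)) := by field_simp; ring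
        have e2 : Real.log ((n:ℝ)/((n:ℝ)+1)) = Real.log n - Real.log ((n:ℝ)+1) := by
          rw [Real.log_div (ne_of_gt hn1) (by positivity)]
        linarith [h3, e.le, e2.le]
      push_cast
      push_cast at ih'
      linarith

lemma sq_sum_le (n : ℕ) : ∑ k ∈ Finset.range n, 1 / ((k : ℝ) + 1) ^ 2 ≤ 2 - 2/((n:ℝ)+1) := by
  induction n with
  | zero => norm_num
  | succ n ih =>
    rw [Finset.sum_range_succ]
    have key : 1 / ((n:ℝ)+1)^2 ≤ 2/((n:ℝ)+1) - 2/((n:ℝ)+1+1) := by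
      rw [div_sub_div _ _ (by positivity) (by positivity), div_le_div_iff₀ (by positivity) (by positivity)]
      ring_nf
      nlinarith [Nat.cast_nonneg (α := ℝ) n]
    push_cast
    push_cast at ih
    linarith

/-- Sum of an antitone nonneg function over a finset of naturals is at most the sum
over the initial segment of the same cardinality. -/
lemma sum_finset_le_sum_range (g : ℕ → ℝ) (hg0 : ∀ k, 0 ≤ g k) (hg : Antitone g)
    (T : Finset ℕ) : ∑ i ∈ T, g i ≤ ∑ k ∈ Finset.range T.card, g k := by
  induction T using Finset.induction_on_max with
  | empty => simp
  | insert a s ha ih =>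
    have hcard : (insert a s).card = s.card + 1 := Finset.card_insert_of_notMem (fun h => lt_irrefl a (ha a h))
    rw [Finset.sum_insert (fun h => lt_irrefl a (ha a h)), hcard, Finset.sum_range_succ]
    have hsub : s ⊆ Finset.range a := fun x hx => Finset.mem_range.mpr (ha x hx)
    have hcard2 : s.card ≤ a := by
      simpa using Finset.card_le_card hsub
    have := hg hcard2
    linarith [ih]



def cc (m : ℕ) : ℝ := 2 * Real.pi - Real.pi / 2 ^ m

def LL (m : ℕ) : ℝ := Real.pi / 2 ^ (m + 1)

lemma LL_pos (m : ℕ) : 0 < LL m := by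
  have := Real.pi_pos; unfold LL; positivity

lemma one_le_two_pow' (m : ℕ) : (1:ℝ) ≤ 2 ^ m := one_le_pow₀ (by norm_num)

lemma cc_add_LL (m : ℕ) : cc m + LL m = cc (m + 1) := by
  unfold cc LL
  have h : (2:ℝ) ^ (m+1) = 2 * 2 ^ m := by ring
  rw [h]
  have h2 : (2:ℝ) ^ m ≠ 0 := by positivity
  field_simp
  ring

lemma pi_le_cc (m : ℕ) : Real.pi ≤ cc m := by
  unfold cc
  have h1 : Real.pi / 2 ^ m ≤ Real.pi := by
    rw [div_le_iff₀ (by positivity)]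
    nlinarith [Real.pi_pos, one_le_two_pow' m]
  linarith

lemma cc_mono : StrictMono cc := by
  have h : ∀ m, cc m < cc (m+1) := by
    intro m
    rw [← cc_add_LL m]
    linarith [LL_pos m]
  exact strictMono_nat_of_lt_succ h

lemma cc_add_LL_le (m : ℕ) : cc m + LL m ≤ 2 * Real.pi := by
  rw [cc_add_LL]
  unfold cc
  have : 0 < Real.pi / 2 ^ (m+1) := by have := Real.pi_pos; positivity
  linarith

lemma cc_add_LL_lt (m : ℕ) : cc m + LL m < 2 * Real.pi := by
  rw [cc_add_LL]
  unfold cc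
  have : 0 < Real.pi / 2 ^ (m+1) := by have := Real.pi_pos; positivity
  linarith

lemma cc_nonneg (m : ℕ) : 0 ≤ cc m := le_trans Real.pi_pos.le (pi_le_cc m)

/-- blocks are disjoint (as `Ico`s) -/
lemma block_disjoint {m m' : ℕ} (h : m ≠ m') {x : ℝ}
    (hx : x ∈ Ico (cc m) (cc m + LL m)) (hx' : x ∈ Ico (cc m') (cc m' + LL m')) : False := by
  rcases Nat.lt_or_ge m m' with hlt | hge
  · have h1 : cc m + LL m ≤ cc m' := by
      rw [cc_add_LL]
      exact (cc_mono.le_iff_le).mpr hlt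
    exact absurd (lt_of_lt_of_le hx.2 h1) (not_lt.mpr hx'.1)
  · have hlt : m' < m := lt_of_le_of_ne hge (Ne.symm h)
    have h1 : cc m' + LL m' ≤ cc m := by
      rw [cc_add_LL]
      exact (cc_mono.le_iff_le).mpr hlt
    exact absurd (lt_of_lt_of_le hx'.2 h1) (not_lt.mpr hx.1)




variable (nn : ℕ → ℕ)

/-- tooth width in block `m` -/
def del (m : ℕ) : ℝ := LL m / (2 * nn m)

/-- the "sawtooth support" set in block `m`: `nn m` teeth -/
def SS (m : ℕ) : Set ℝ :=
  {x | ∃ t, t < nn m ∧ cc m + 2 * t * del nn m ≤ x ∧ x ≤ cc m + (2 * t + 1) * del nn m}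

variable {nn}
variable (hnn : ∀ m, 1 ≤ nn m)

include hnn

lemma del_pos (m : ℕ) : 0 < del nn m := by
  unfold del
  have h1 : (0:ℝ) < nn m := by exact_mod_cast hnn m
  have := LL_pos m
  positivity

lemma SS_subset (m : ℕ) : SS nn m ⊆ Ico (cc m) (cc m + LL m) := by
  intro x hx
  obtain ⟨t, ht, h1, h2⟩ := hx
  have hd := del_pos hnn m
  constructor
  · have : (0:ℝ) ≤ 2 * t * del nn m := by positivity
    linarith
  · have htr : (2 * (t:ℝ) + 1) ≤ 2 * nn m - 1 := by
      have : (t:ℝ) + 1 ≤ nn m := by exact_mod_cast ht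
      linarith
    have hL : (2 * (nn m : ℝ)) * del nn m = LL m := by
      unfold del
      have h1 : (0:ℝ) < nn m := by exact_mod_cast hnn m
      field_simp
    nlinarith

lemma SS_unique {m m' : ℕ} {x : ℝ} (hx : x ∈ SS nn m) (hx' : x ∈ SS nn m') : m = m' := by
  by_contra h
  exact block_disjoint h (SS_subset hnn m hx) (SS_subset hnn m' hx')

lemma SS_subset_Icc (m : ℕ) : SS nn m ⊆ Icc 0 (2 * Real.pi) := by
  intro x hx
  have h := SS_subset hnn m hx
  exact ⟨le_trans (cc_nonneg m) h.1, le_trans h.2.le (cc_add_LL_le m)⟩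

lemma zero_not_mem_SS (m : ℕ) : (0:ℝ) ∉ SS nn m := by
  intro h
  have := (SS_subset hnn m h).1
  linarith [pi_le_cc m, Real.pi_pos]

lemma two_pi_not_mem_SS (m : ℕ) : (2 * Real.pi) ∉ SS nn m := by
  intro h
  have := (SS_subset hnn m h).2
  linarith [cc_add_LL_lt m]

/-- tooth starting points are in `SS` -/
lemma tooth_start_mem {m t : ℕ} (ht : t < nn m) : cc m + 2 * t * del nn m ∈ SS nn m := by
  refine ⟨t, ht, le_refl _, ?_⟩
  have := del_pos hnn m
  nlinarith

/-- points of the form `cc m + (2t + 3/2) δ` with `t + 1 < nn m` are in the block but not in `SS` -/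
lemma gap_not_mem {m t : ℕ} (ht : t + 1 < nn m) :
    ∀ m', cc m + (2 * t + 3/2) * del nn m ∉ SS nn m' := by
  have hd := del_pos hnn m
  have hmem : cc m + (2 * (t:ℝ) + 3/2) * del nn m ∈ Ico (cc m) (cc m + LL m) := by
    constructor
    · nlinarith
    · have htr : (2 * (t:ℝ) + 3/2) ≤ 2 * nn m - 1/2 := by
        have : (t:ℝ) + 2 ≤ nn m := by exact_mod_cast ht
        linarith
      have hL : (2 * (nn m : ℝ)) * del nn m = LL m := by
        unfold del
        have h1 : (0:ℝ) < nn m := by exact_mod_cast hnn m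
        field_simp
      nlinarith
  intro m' hmem'
  by_cases h : m' = m
  · subst h
    obtain ⟨s, hs, h1, h2⟩ := hmem'
    -- 2s ≤ 2t + 3/2 and 2t + 3/2 ≤ 2s + 1
    have e1 : (2 * (s:ℝ)) ≤ 2 * t + 3/2 := by nlinarith
    have e2 : (2 * (t:ℝ) + 3/2) ≤ 2 * s + 1 := by nlinarith
    have : (s:ℝ) ≤ t := by
      by_contra hc
      push_neg at hc
      have : (t:ℝ) + 1 ≤ s := by exact_mod_cast Nat.succ_le_of_lt (by exact_mod_cast hc)
      linarith
    linarith
  · exact block_disjoint (Ne.symm h) hmem (SS_subset hnn m' hmem')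

/-- `SS` endpoints (boundary grid): the point `cc m + k δ` for `k < 2 nn m` -/
def bpt (m k : ℕ) : ℝ := cc m + k * del nn m

/-- if `χ_{SS m}` differs at `a < b` then some boundary point lies in `[a,b]`. -/
lemma exists_bpt {m : ℕ} {a b : ℝ} (hab : a ≤ b)
    (h : ¬ ((b ∈ SS nn m) ↔ (a ∈ SS nn m))) :
    ∃ k, k < 2 * nn m ∧ a ≤ bpt (nn := nn) m k ∧ bpt (nn := nn) m k ≤ b := by
  have hd := del_pos hnn m
  by_cases hb : b ∈ SS nn m
  · have ha : a ∉ SS nn m := fun ha' => h (iff_of_true hb ha')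
    obtain ⟨t, ht, h1, h2⟩ := hb
    refine ⟨2 * t, by omega, ?_, ?_⟩
    · by_contra hc
      push_neg at hc
      unfold bpt at hc
      push_cast at hc
      exact ha ⟨t, ht, by push_cast; linarith, by push_cast; linarith⟩
    · unfold bpt; push_cast; linarith
  · have ha : a ∈ SS nn m := by
      by_contra ha
      exact h (iff_of_false hb ha)
    obtain ⟨t, ht, h1, h2⟩ := ha
    refine ⟨2 * t + 1, by omega, ?_, ?_⟩
    · unfold bpt; push_cast; linarith
    · by_contra hc
      push_neg at hc
      unfold bpt at hc
      exact hb ⟨t, ht, by push_cast at hc ⊢; linarith, by push_cast at hc ⊢; linarith⟩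


omit hnn

/-! ### The function -/

variable (nn) (Λ : ℕ → ℝ)

def DD (m : ℕ) : ℝ := ∑ k ∈ Finset.range (4 * nn m), 1 / Λ (k + 1)

def aa (m : ℕ) : ℝ := 1 / (((m : ℝ) + 1) ^ 2 * DD nn Λ m)

def FF : ℝ → ℝ → ℝ := fun x y =>
  if h : ∃ m, x ∈ SS nn m ∧ y ∈ SS nn m then aa nn Λ h.choose else 0

def wrap (x : ℝ) : ℝ := x - 2 * Real.pi * (⌊x / (2 * Real.pi)⌋ : ℤ)

def ff : ℝ → ℝ → ℝ := fun x y => FF nn Λ (wrap x) (wrap y)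

variable {nn} {Λ}
variable (hΛpos : ∀ n, 1 ≤ n → 0 < Λ n)

include hΛpos

lemma DD_pos (m : ℕ) (hm : 1 ≤ nn m) : 0 < DD nn Λ m := by
  apply Finset.sum_pos
  · intro k _
    have := hΛpos (k+1) (by omega)
    positivity
  · exact ⟨0, Finset.mem_range.mpr (by omega)⟩

lemma aa_pos (m : ℕ) (hm : 1 ≤ nn m) : 0 < aa nn Λ m := by
  have := DD_pos hΛpos m hm
  unfold aa
  positivity

omit hΛpos

section FFlem
include hnn

lemma FF_eq_of_mem {x y : ℝ} {m : ℕ} (hx : x ∈ SS nn m) (hy : y ∈ SS nn m) :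
    FF nn Λ x y = aa nn Λ m := by
  have h : ∃ m, x ∈ SS nn m ∧ y ∈ SS nn m := ⟨m, hx, hy⟩
  rw [FF, dif_pos h]
  congr 1
  exact SS_unique hnn h.choose_spec.1 hx

omit hnn

lemma FF_zero_left {x : ℝ} (hx : ∀ m, x ∉ SS nn m) (y : ℝ) : FF nn Λ x y = 0 := by
  rw [FF, dif_neg]
  rintro ⟨m, hm, -⟩
  exact hx m hm

lemma FF_zero_right (x : ℝ) {y : ℝ} (hy : ∀ m, y ∉ SS nn m) : FF nn Λ x y = 0 := by
  rw [FF, dif_neg]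
  rintro ⟨m, -, hm⟩
  exact hy m hm

include hnn

lemma FF_apply {y : ℝ} {m : ℕ} (hy : y ∈ SS nn m) (x : ℝ) :
    FF nn Λ x y = if x ∈ SS nn m then aa nn Λ m else 0 := by
  by_cases hx : x ∈ SS nn m
  · rw [if_pos hx]
    exact FF_eq_of_mem hnn hx hy
  · rw [if_neg hx, FF, dif_neg]
    rintro ⟨m', hx', hy'⟩
    exact hx (SS_unique hnn hy' hy ▸ hx')

lemma FF_symm (x y : ℝ) : FF nn Λ x y = FF nn Λ y x := by
  unfold FF
  by_cases h : ∃ m, x ∈ SS nn m ∧ y ∈ SS nn m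
  · have h' : ∃ m, y ∈ SS nn m ∧ x ∈ SS nn m := ⟨h.choose, h.choose_spec.2, h.choose_spec.1⟩
    rw [dif_pos h, dif_pos h']
    congr 1
    exact SS_unique hnn h.choose_spec.1 h'.choose_spec.2
  · have h' : ¬ ∃ m, y ∈ SS nn m ∧ x ∈ SS nn m := fun ⟨m, h1, h2⟩ => h ⟨m, h2, h1⟩
    rw [dif_neg h, dif_neg h']

end FFlem

lemma wrap_periodic (x : ℝ) : wrap (x + 2 * Real.pi) = wrap x := by
  unfold wrap
  have hpi : (2 * Real.pi) ≠ 0 := by positivity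
  have : (x + 2 * Real.pi) / (2 * Real.pi) = x / (2 * Real.pi) + 1 := by field_simp
  rw [this, Int.floor_add_one]
  push_cast
  ring

lemma wrap_eq_self {x : ℝ} (h0 : 0 ≤ x) (h2 : x < 2 * Real.pi) : wrap x = x := by
  unfold wrap
  have hpi : (0:ℝ) < 2 * Real.pi := by positivity
  have : ⌊x / (2 * Real.pi)⌋ = 0 := by
    rw [Int.floor_eq_zero_iff]
    constructor
    · positivity
    · rw [div_lt_one hpi] at *
      simpa using h2
  rw [this]
  push_cast
  ring

lemma wrap_two_pi : wrap (2 * Real.pi) = 0 := by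
  unfold wrap
  have hpi : (2 * Real.pi) ≠ 0 := by positivity
  rw [div_self hpi]
  norm_num

section ffl
include hnn

lemma wrap_mem_iff {x : ℝ} (hx : x ∈ Icc 0 (2 * Real.pi)) (m : ℕ) :
    wrap x ∈ SS nn m ↔ x ∈ SS nn m := by
  rcases lt_or_eq_of_le hx.2 with h | h
  · rw [wrap_eq_self hx.1 h]
  · rw [h, wrap_two_pi]
    simp only [iff_iff_implies_and_implies]
    exact ⟨fun hc => absurd hc (zero_not_mem_SS hnn m),
      fun hc => absurd hc (two_pi_not_mem_SS hnn m)⟩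

lemma FF_congr {x x' y y' : ℝ} (hx : ∀ m, (x ∈ SS nn m ↔ x' ∈ SS nn m))
    (hy : ∀ m, (y ∈ SS nn m ↔ y' ∈ SS nn m)) : FF nn Λ x y = FF nn Λ x' y' := by
  unfold FF
  by_cases h : ∃ m, x ∈ SS nn m ∧ y ∈ SS nn m
  · have h' : ∃ m, x' ∈ SS nn m ∧ y' ∈ SS nn m :=
      ⟨h.choose, (hx _).mp h.choose_spec.1, (hy _).mp h.choose_spec.2⟩
    rw [dif_pos h, dif_pos h']
    congr 1
    exact SS_unique hnn h.choose_spec.1 ((hx _).mpr h'.choose_spec.1)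
  · have h' : ¬ ∃ m, x' ∈ SS nn m ∧ y' ∈ SS nn m :=
      fun ⟨m, h1, h2⟩ => h ⟨m, (hx m).mpr h1, (hy m).mpr h2⟩
    rw [dif_neg h, dif_neg h']

lemma ff_eq {x y : ℝ} (hx : x ∈ Icc 0 (2 * Real.pi)) (hy : y ∈ Icc 0 (2 * Real.pi)) :
    ff nn Λ x y = FF nn Λ x y :=
  FF_congr hnn (wrap_mem_iff hnn hx) (wrap_mem_iff hnn hy)

lemma ff_periodic2 : Periodic2 (ff nn Λ) := by
  intro x y
  unfold ff
  rw [wrap_periodic x, wrap_periodic y]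
  exact ⟨rfl, rfl⟩

end ffl

/-! ### Counting crossings and the sharp variation bound -/

lemma lam_mono (hΛmono : ∀ n, 1 ≤ n → Λ n ≤ Λ (n + 1)) :
    ∀ i j, 1 ≤ i → i ≤ j → Λ i ≤ Λ j := by
  intro i j h1 hij
  refine Nat.le_induction (le_refl _) (fun k hk ih => le_trans ih (hΛmono k (le_trans h1 hk))) j hij

lemma inv_lam_antitone (hΛpos : ∀ n, 1 ≤ n → 0 < Λ n)
    (hΛmono : ∀ n, 1 ≤ n → Λ n ≤ Λ (n + 1)) :
    Antitone (fun k : ℕ => 1 / Λ (k + 1)) := by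
  intro k k' h
  exact one_div_le_one_div_of_le (hΛpos (k+1) (by omega))
    (lam_mono hΛmono (k+1) (k'+1) (by omega) (by omega))

section count
include hnn

lemma card_crossings_le (n : ℕ) (I : Fin n → ℝ × ℝ) (hI : NonoverlapIcc n I) (m : ℕ) :
    (Finset.univ.filter fun i : Fin n =>
      ¬(((I i).2 ∈ SS nn m) ↔ ((I i).1 ∈ SS nn m))).card ≤ 4 * nn m := by
  classical
  set T := Finset.univ.filter fun i : Fin n =>
      ¬(((I i).2 ∈ SS nn m) ↔ ((I i).1 ∈ SS nn m)) with hT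
  have hex : ∀ i ∈ T, ∃ k, k < 2 * nn m ∧ (I i).1 ≤ bpt (nn := nn) m k ∧
      bpt (nn := nn) m k ≤ (I i).2 := by
    intro i hi
    exact exists_bpt hnn (le_of_lt (hI.1 i).2.1) (Finset.mem_filter.mp hi).2
  set K : Fin n → ℕ := fun i => if h : ∃ k, k < 2*nn m ∧ (I i).1 ≤ bpt (nn := nn) m k ∧
      bpt (nn := nn) m k ≤ (I i).2 then h.choose else 0 with hK
  set P : Fin n → ℝ := fun i => bpt (nn := nn) m (K i) with hP
  set G : Fin n → ℝ × Bool := fun i => (P i, decide (P i = (I i).2)) with hG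
  have hspec : ∀ i ∈ T, K i < 2*nn m ∧ (I i).1 ≤ P i ∧ P i ≤ (I i).2 := by
    intro i hi
    have h := hex i hi
    simp only [hK, hP, dif_pos h]
    exact h.choose_spec
  have hmaps : ∀ i ∈ T, G i ∈
      ((Finset.range (2*nn m)).image (fun k => bpt (nn := nn) m k)) ×ˢ (Finset.univ : Finset Bool) := by
    intro i hi
    exact Finset.mem_product.mpr
      ⟨Finset.mem_image.mpr ⟨K i, Finset.mem_range.mpr (hspec i hi).1, rfl⟩, Finset.mem_univ _⟩
  have hinj : Set.InjOn G T := by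
    intro i hi j hj hGij
    by_contra hne
    obtain ⟨-, hai, hbi⟩ := hspec i hi
    obtain ⟨-, haj, hbj⟩ := hspec j hj
    have hPij : P i = P j := congrArg Prod.fst hGij
    have hb : decide (P i = (I i).2) = decide (P j = (I j).2) := congrArg Prod.snd hGij
    have hlt_i := (hI.1 i).2.1
    have hlt_j := (hI.1 j).2.1
    rcases hI.2 i j hne with hord | hord
    · have h1 : P i = (I i).2 := le_antisymm hbi (by rw [hPij]; linarith)
      have h2 : P j ≠ (I j).2 := by
        have : P j = (I j).1 := le_antisymm (by rw [← hPij]; linarith) haj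
        rw [this]; exact ne_of_lt hlt_j
      simp only [decide_eq_decide] at hb
      exact h2 (hb.mp h1)
    · have h1 : P j = (I j).2 := le_antisymm hbj (by rw [← hPij]; linarith)
      have h2 : P i ≠ (I i).2 := by
        have : P i = (I i).1 := le_antisymm (by rw [hPij]; linarith) hai
        rw [this]; exact ne_of_lt hlt_i
      simp only [decide_eq_decide] at hb
      exact h2 (hb.mpr h1)
  have hcard := Finset.card_le_card_of_injOn G hmaps hinj
  calc T.card ≤ _ := hcard
    _ ≤ 4 * nn m := by
        rw [Finset.card_product]
        have h1 : ((Finset.range (2*nn m)).image (fun k => bpt (nn := nn) m k)).card ≤ 2 * nn m := by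
          refine le_trans (Finset.card_image_le) (by simp)
        have h2 : (Finset.univ : Finset Bool).card = 2 := by simp
        rw [h2]
        omega

lemma sharp_sum_le (hΛpos : ∀ n, 1 ≤ n → 0 < Λ n)
    (hΛmono : ∀ n, 1 ≤ n → Λ n ≤ Λ (n + 1))
    (n : ℕ) (I : Fin n → ℝ × ℝ) (y : Fin n → ℝ) (hI : NonoverlapIcc n I)
    (hy : ∀ i, y i ∈ Icc (0:ℝ) (2 * Real.pi)) :
    ∑ i, |ff nn Λ (I i).2 (y i) - ff nn Λ (I i).1 (y i)| / Λ ((i : ℕ) + 1) ≤ 2 := by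
  classical
  set blk : Fin n → ℕ := fun i => if h : ∃ m, y i ∈ SS nn m then h.choose else 0 with hblk
  set cond : Fin n → Prop := fun i => y i ∈ SS nn (blk i) ∧
      ¬(((I i).2 ∈ SS nn (blk i)) ↔ ((I i).1 ∈ SS nn (blk i))) with hcond
  have hpt : ∀ i : Fin n, (I i).1 ∈ Icc (0:ℝ) (2*Real.pi) ∧ (I i).2 ∈ Icc (0:ℝ) (2*Real.pi) := by
    intro i
    obtain ⟨h0, h1, h2⟩ := hI.1 i
    exact ⟨⟨h0, le_trans h1.le h2⟩, ⟨le_trans h0 h1.le, h2⟩⟩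
  have hterm : ∀ i : Fin n, |ff nn Λ (I i).2 (y i) - ff nn Λ (I i).1 (y i)| =
      (if cond i then aa nn Λ (blk i) else 0) := by
    intro i
    rw [ff_eq hnn (hpt i).2 (hy i), ff_eq hnn (hpt i).1 (hy i)]
    by_cases hE : ∃ m, y i ∈ SS nn m
    · have hbm : blk i = hE.choose := by simp only [hblk, dif_pos hE]
      have hym : y i ∈ SS nn (blk i) := by rw [hbm]; exact hE.choose_spec
      have haapos := (aa_pos hΛpos (blk i) (hnn (blk i))).le
      rw [FF_apply hnn hym, FF_apply hnn hym]
      by_cases hb : (I i).2 ∈ SS nn (blk i) <;> by_cases ha : (I i).1 ∈ SS nn (blk i)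
      · rw [if_pos hb, if_pos ha, if_neg]
        · simp
        · simp only [hcond]
          tauto
      · rw [if_pos hb, if_neg ha, if_pos]
        · rw [sub_zero, abs_of_nonneg haapos]
        · simp only [hcond]
          tauto
      · rw [if_neg hb, if_pos ha, if_pos]
        · rw [zero_sub, abs_neg, abs_of_nonneg haapos]
        · simp only [hcond]
          tauto
      · rw [if_neg hb, if_neg ha, if_neg]
        · simp
        · simp only [hcond]
          tauto
    · have hy0 : ∀ m, y i ∉ SS nn m := fun m hm => hE ⟨m, hm⟩
      rw [FF_zero_right _ hy0, FF_zero_right _ hy0, if_neg]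
      · simp
      · simp only [hcond]
        intro hc
        exact hy0 _ hc.1
  have hstep : ∀ i : Fin n, |ff nn Λ (I i).2 (y i) - ff nn Λ (I i).1 (y i)| / Λ ((i : ℕ) + 1)
      = (if cond i then aa nn Λ (blk i) / Λ ((i : ℕ) + 1) else 0) := by
    intro i
    rw [hterm i]
    split_ifs <;> simp
  rw [Finset.sum_congr rfl (fun i _ => hstep i)]
  -- group by fibers of blk
  rw [← Finset.sum_fiberwise_of_maps_to (g := blk) (t := Finset.univ.image blk)
      (fun i _ => Finset.mem_image_of_mem blk (Finset.mem_univ i))]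
  have hfiber : ∀ m ∈ Finset.univ.image blk,
      (∑ i ∈ Finset.univ.filter fun i => blk i = m,
        if cond i then aa nn Λ (blk i) / Λ ((i : ℕ) + 1) else 0) ≤ 1 / ((m : ℝ) + 1) ^ 2 := by
    intro m _
    have hDD := DD_pos hΛpos m (hnn m)
    have haa := aa_pos hΛpos m (hnn m)
    -- rewrite terms inside the fiber
    have h1 : (∑ i ∈ Finset.univ.filter fun i => blk i = m,
        if cond i then aa nn Λ (blk i) / Λ ((i : ℕ) + 1) else 0)
        = ∑ i ∈ (Finset.univ.filter fun i => blk i = m).filter cond,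
            aa nn Λ (blk i) / Λ ((i : ℕ) + 1) := (Finset.sum_filter _ _).symm
    rw [h1]
    set T' := Finset.univ.filter fun i : Fin n =>
        ¬(((I i).2 ∈ SS nn m) ↔ ((I i).1 ∈ SS nn m)) with hT'
    have hsub : (Finset.univ.filter fun i => blk i = m).filter cond ⊆ T' := by
      intro i hi
      simp only [Finset.mem_filter, Finset.mem_univ, true_and] at hi
      obtain ⟨hbm, hc⟩ := hi
      simp only [hT', Finset.mem_filter, Finset.mem_univ, true_and]
      rw [← hbm]
      exact hc.2
    have h2 : (∑ i ∈ (Finset.univ.filter fun i => blk i = m).filter cond,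
        aa nn Λ (blk i) / Λ ((i : ℕ) + 1)) ≤ ∑ i ∈ T', aa nn Λ m / Λ ((i : ℕ) + 1) := by
      have : ∀ i ∈ (Finset.univ.filter fun i => blk i = m).filter cond,
          aa nn Λ (blk i) / Λ ((i : ℕ) + 1) = aa nn Λ m / Λ ((i : ℕ) + 1) := by
        intro i hi
        simp only [Finset.mem_filter, Finset.mem_univ, true_and] at hi
        rw [hi.1]
      rw [Finset.sum_congr rfl this]
      refine Finset.sum_le_sum_of_subset_of_nonneg hsub ?_
      intro i _ _
      have := hΛpos ((i : ℕ) + 1) (by omega)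
      positivity
    have h3 : (∑ i ∈ T', aa nn Λ m / Λ ((i : ℕ) + 1)) = aa nn Λ m * ∑ i ∈ T', 1 / Λ ((i : ℕ) + 1) := by
      rw [Finset.mul_sum]
      exact Finset.sum_congr rfl (fun i _ => by field_simp)
    have h4 : (∑ i ∈ T', 1 / Λ ((i : ℕ) + 1)) ≤ DD nn Λ m := by
      have e1 : (∑ i ∈ T', 1 / Λ ((i : ℕ) + 1)) = ∑ k ∈ T'.image (Fin.val), 1 / Λ (k + 1) := by
        rw [Finset.sum_image (fun i _ j _ h => Fin.val_injective h)]
      rw [e1]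
      have e2 := sum_finset_le_sum_range (fun k => 1 / Λ (k+1))
        (fun k => le_of_lt (by have := hΛpos (k+1) (by omega); positivity))
        (inv_lam_antitone hΛpos hΛmono) (T'.image Fin.val)
      refine le_trans e2 ?_
      have e3 : (T'.image Fin.val).card ≤ 4 * nn m := by
        rw [Finset.card_image_of_injective _ Fin.val_injective]
        exact card_crossings_le hnn n I hI m
      refine Finset.sum_le_sum_of_subset_of_nonneg
        (Finset.range_subset_range.mpr e3) ?_
      intro k _ _
      have := hΛpos (k+1) (by omega)
      positivity
    have h5 : aa nn Λ m * DD nn Λ m = 1 / ((m : ℝ) + 1) ^ 2 := by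
      unfold aa
      field_simp
    calc (∑ i ∈ (Finset.univ.filter fun i => blk i = m).filter cond,
            aa nn Λ (blk i) / Λ ((i : ℕ) + 1)) ≤ aa nn Λ m * ∑ i ∈ T', 1 / Λ ((i : ℕ) + 1) := by
            rw [← h3]; exact h2
      _ ≤ aa nn Λ m * DD nn Λ m := by
            exact mul_le_mul_of_nonneg_left h4 haa.le
      _ = 1 / ((m : ℝ) + 1) ^ 2 := h5
  calc (∑ m ∈ Finset.univ.image blk, ∑ i ∈ Finset.univ.filter fun i => blk i = m,
          if cond i then aa nn Λ (blk i) / Λ ((i : ℕ) + 1) else 0)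
      ≤ ∑ m ∈ Finset.univ.image blk, 1 / ((m : ℝ) + 1) ^ 2 := Finset.sum_le_sum hfiber
    _ ≤ ∑ k ∈ Finset.range (Finset.univ.image blk).card, 1 / ((k : ℝ) + 1) ^ 2 := by
        refine sum_finset_le_sum_range _ (fun k => by positivity) ?_ _
        intro k k' h
        have hk : (k:ℝ) ≤ k' := by exact_mod_cast h
        apply one_div_le_one_div_of_le (by positivity)
        nlinarith [Nat.cast_nonneg (α := ℝ) k]
    _ ≤ 2 - 2 / (((Finset.univ.image blk).card : ℝ) + 1) := sq_sum_le _
    _ ≤ 2 := by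
        have : (0:ℝ) < ((Finset.univ.image blk).card : ℝ) + 1 := by positivity
        have h2 : 0 < 2 / (((Finset.univ.image blk).card : ℝ) + 1) := by positivity
        linarith

end count

/-! ### Lower bound: harmonic mixed variation is infinite -/

lemma three_le_log21 : (3:ℝ) ≤ Real.log 21 := by
  have h1 : Real.exp 1 ≤ 2.7182818286 := Real.exp_one_lt_d9.le
  have h2 : Real.exp 3 ≤ 21 := by
    have e : Real.exp 3 = Real.exp 1 ^ (3:ℕ) := by
      rw [← Real.exp_nat_mul]; norm_num
    rw [e]
    calc Real.exp 1 ^ (3:ℕ) ≤ 2.7182818286 ^ (3:ℕ) :=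
          pow_le_pow_left₀ (Real.exp_pos 1).le h1 3
      _ ≤ 21 := by norm_num
  calc (3:ℝ) = Real.log (Real.exp 3) := (Real.log_exp 3).symm
    _ ≤ Real.log 21 := Real.log_le_log (Real.exp_pos 3) h2

lemma log4_le : Real.log 4 ≤ 1.4 := by
  have h : (4:ℝ) = 2 ^ (2:ℕ) := by norm_num
  rw [h, Real.log_pow]
  have := Real.log_two_lt_d9
  push_cast
  linarith

lemma ratio_anti (hdec : ∀ n, 1 ≤ n → Λ (n + 1) / ((n : ℝ) + 1) ≤ Λ n / (n : ℝ)) :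
    ∀ i j, 1 ≤ i → i ≤ j → Λ j / (j : ℝ) ≤ Λ i / (i : ℝ) := by
  intro i j h1 hij
  refine Nat.le_induction (le_refl _) (fun k hk ih => le_trans ?_ ih) j hij
  have := hdec k (le_trans h1 hk)
  push_cast
  exact this

section lower

variable (hΛpos : ∀ n, 1 ≤ n → 0 < Λ n)
    (hΛmono : ∀ n, 1 ≤ n → Λ n ≤ Λ (n + 1))
    (hΛdec : ∀ n, 1 ≤ n → Λ (n + 1) / ((n : ℝ) + 1) ≤ Λ n / (n : ℝ))

include hΛpos hΛmono hΛdec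

lemma DD_le (m : ℕ) (h21 : 21 ≤ nn m) :
    DD nn Λ m ≤ 8 * (nn m : ℝ) * Real.log (nn m) / Λ (nn m) := by
  have hn1 : 1 ≤ nn m := by omega
  have hnR : (21:ℝ) ≤ (nn m : ℝ) := by exact_mod_cast h21
  have hnpos : (0:ℝ) < nn m := by linarith
  have hlog : (3:ℝ) ≤ Real.log (nn m) :=
    le_trans three_le_log21 (Real.log_le_log (by norm_num) hnR)
  have hΛn := hΛpos (nn m) hn1
  have hΛ4n := hΛpos (4 * nn m) (by omega)
  have hterm : ∀ k ∈ Finset.range (4 * nn m),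
      1 / Λ (k + 1) ≤ (4 * (nn m : ℝ) / Λ (nn m)) * (1 / ((k:ℝ) + 1)) := by
    intro k hk
    have hk' := Finset.mem_range.mp hk
    have hΛk := hΛpos (k+1) (by omega)
    have hkpos : (0:ℝ) < (k:ℝ) + 1 := by positivity
    have h4npos : (0:ℝ) < 4 * (nn m : ℝ) := by positivity
    have hr := ratio_anti hΛdec (k+1) (4 * nn m) (by omega) (by omega)
    have hcast : ((4 * nn m : ℕ) : ℝ) = 4 * (nn m : ℝ) := by push_cast; ring
    have hcast2 : ((k + 1 : ℕ) : ℝ) = (k:ℝ) + 1 := by push_cast; ring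
    rw [hcast, hcast2] at hr
    have hcross : Λ (4 * nn m) * ((k:ℝ) + 1) ≤ Λ (k+1) * (4 * (nn m : ℝ)) := by
      rw [div_le_div_iff₀ h4npos hkpos] at hr
      linarith
    have hmono4 : Λ (nn m) ≤ Λ (4 * nn m) := lam_mono hΛmono (nn m) (4 * nn m) hn1 (by omega)
    have e : (4 * (nn m : ℝ) / Λ (nn m)) * (1 / ((k:ℝ) + 1))
        = 4 * (nn m:ℝ) / (Λ (nn m) * ((k:ℝ)+1)) := by
      field_simp
    rw [e, div_le_div_iff₀ hΛk (by positivity)]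
    have h5 : Λ (nn m) * ((k:ℝ)+1) ≤ Λ (4 * nn m) * ((k:ℝ)+1) :=
      mul_le_mul_of_nonneg_right hmono4 (by positivity)
    nlinarith [hcross]
  calc DD nn Λ m ≤ ∑ k ∈ Finset.range (4 * nn m), (4 * (nn m : ℝ) / Λ (nn m)) * (1 / ((k:ℝ) + 1)) :=
        Finset.sum_le_sum hterm
    _ = (4 * (nn m : ℝ) / Λ (nn m)) * ∑ k ∈ Finset.range (4 * nn m), 1 / ((k:ℝ) + 1) :=
        (Finset.mul_sum _ _ _).symm
    _ ≤ (4 * (nn m : ℝ) / Λ (nn m)) * (1 + Real.log ((4 * nn m : ℕ) : ℝ)) :=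
        mul_le_mul_of_nonneg_left (harm_le (4 * nn m) (by omega)) (by positivity)
    _ ≤ (4 * (nn m : ℝ) / Λ (nn m)) * (2 * Real.log (nn m)) := by
        have hc : ((4 * nn m : ℕ) : ℝ) = 4 * (nn m : ℝ) := by push_cast; ring
        have hl : Real.log (4 * (nn m : ℝ)) = Real.log 4 + Real.log (nn m) :=
          Real.log_mul (by norm_num) (ne_of_gt hnpos)
        rw [hc, hl]
        apply mul_le_mul_of_nonneg_left ?_ (by positivity)
        linarith [log4_le]
    _ = 8 * (nn m : ℝ) * Real.log (nn m) / Λ (nn m) := by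
        field_simp
        ring

lemma aa_log_ge (m : ℕ) (h21 : 21 ≤ nn m)
    (hbig : 16 * ((m:ℝ) + 1) ^ 3 ≤ Λ (nn m) * Real.log (nn m) / (nn m)) :
    2 * ((m:ℝ) + 1) ≤ aa nn Λ m * Real.log (nn m) ^ 2 := by
  have hn1 : 1 ≤ nn m := by omega
  have hnR : (21:ℝ) ≤ (nn m : ℝ) := by exact_mod_cast h21
  have hnpos : (0:ℝ) < nn m := by linarith
  have hlog : (3:ℝ) ≤ Real.log (nn m) :=
    le_trans three_le_log21 (Real.log_le_log (by norm_num) hnR)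
  have hΛn := hΛpos (nn m) hn1
  have hDD := DD_pos hΛpos m hn1
  have hDDle := DD_le hΛpos hΛmono hΛdec m h21
  have hXpos : (0:ℝ) < 8 * (nn m : ℝ) * Real.log (nn m) / Λ (nn m) := by positivity
  have haan : 1 / (((m:ℝ)+1)^2 * (8 * (nn m : ℝ) * Real.log (nn m) / Λ (nn m))) ≤ aa nn Λ m := by
    unfold aa
    apply one_div_le_one_div_of_le (by positivity)
    exact mul_le_mul_of_nonneg_left hDDle (by positivity)
  have hkey : 1 / (((m:ℝ)+1)^2 * (8 * (nn m:ℝ) * Real.log (nn m) / Λ (nn m))) * Real.log (nn m) ^ 2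
      = (Λ (nn m) * Real.log (nn m) / (nn m)) / (8 * ((m:ℝ)+1)^2) := by
    field_simp
  calc 2 * ((m:ℝ)+1) = (16 * ((m:ℝ)+1)^3) / (8 * ((m:ℝ)+1)^2) := by
        field_simp
        ring
    _ ≤ (Λ (nn m) * Real.log (nn m) / (nn m)) / (8 * ((m:ℝ)+1)^2) := by
        gcongr
    _ = 1 / (((m:ℝ)+1)^2 * (8 * (nn m:ℝ) * Real.log (nn m) / Λ (nn m))) * Real.log (nn m) ^ 2 :=
        hkey.symm
    _ ≤ aa nn Λ m * Real.log (nn m) ^ 2 :=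
        mul_le_mul_of_nonneg_right haan (sq_nonneg _)

end lower

/-! ### LamV12 is infinite -/

section grid
include hnn

lemma ff_symm (x y : ℝ) : ff nn Λ x y = ff nn Λ y x := FF_symm hnn _ _

lemma lamV12_top
    (hΛpos : ∀ n, 1 ≤ n → 0 < Λ n)
    (hΛmono : ∀ n, 1 ≤ n → Λ n ≤ Λ (n + 1))
    (hΛdec : ∀ n, 1 ≤ n → Λ (n + 1) / ((n : ℝ) + 1) ≤ Λ n / (n : ℝ))
    (h21 : ∀ m, 21 ≤ nn m)
    (hbig : ∀ m : ℕ, 16 * ((m:ℝ) + 1) ^ 3 ≤ Λ (nn m) * Real.log (nn m) / (nn m)) :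
    LamV12 (fun k => (k : ℝ)) (ff nn Λ) = ⊤ := by
  apply ENNReal.eq_top_of_forall_nnreal_le
  intro r
  obtain ⟨m, hm⟩ := exists_nat_ge (r : ℝ)
  have hn1 : 1 ≤ nn m := by have := h21 m; omega
  set N := nn m - 1 with hN
  have hNsucc : N + 1 = nn m := by omega
  have hd := del_pos hnn m
  have hnR : (0:ℝ) < nn m := by
    have : (1:ℝ) ≤ (nn m : ℝ) := by exact_mod_cast hn1
    linarith
  have hLL : (2 * (nn m : ℝ)) * del nn m = LL m := by
    unfold del
    field_simp
  set gI : Fin N → ℝ × ℝ := fun t =>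
    (cc m + (2 * ((t:ℕ):ℝ) + 3/2) * del nn m, cc m + (2 * ((t:ℕ):ℝ) + 2) * del nn m) with hgI
  have htlt : ∀ t : Fin N, ((t:ℕ):ℝ) + 1 ≤ (N : ℝ) := by
    intro t
    exact_mod_cast t.isLt
  have hNle : (N : ℝ) ≤ (nn m : ℝ) - 1 := by
    have : (N:ℝ) + 1 = (nn m : ℝ) := by exact_mod_cast hNsucc
    linarith
  have hNon : NonoverlapIcc N gI := by
    constructor
    · intro t
      have ht := htlt t
      have hc0 := cc_nonneg m
      have htnn : (0:ℝ) ≤ ((t:ℕ):ℝ) := Nat.cast_nonneg _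
      simp only [hgI]
      have hp1 : (0:ℝ) ≤ (2 * ((t:ℕ):ℝ) + 3/2) * del nn m := by positivity
      have hp2 : (2 * ((t:ℕ):ℝ) + 3/2) * del nn m < (2 * ((t:ℕ):ℝ) + 2) * del nn m := by
        have h32 : (2 * ((t:ℕ):ℝ) + 3/2) < 2 * ((t:ℕ):ℝ) + 2 := by linarith
        exact mul_lt_mul_of_pos_right h32 hd
      refine ⟨by linarith, by linarith, ?_⟩
      have h1 : (2 * ((t:ℕ):ℝ) + 2) * del nn m ≤ (2 * (nn m : ℝ)) * del nn m :=
        mul_le_mul_of_nonneg_right (by linarith) hd.le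
      calc cc m + (2 * ((t:ℕ):ℝ) + 2) * del nn m ≤ cc m + (2 * (nn m : ℝ)) * del nn m := by
            linarith
        _ = cc m + LL m := by rw [hLL]
        _ ≤ 2 * Real.pi := cc_add_LL_le m
    · intro i j hij
      have hvij : (i:ℕ) ≠ (j:ℕ) := fun h => hij (Fin.ext h)
      rcases hvij.lt_or_gt with h | h
      · left
        have hcast : ((i:ℕ):ℝ) + 1 ≤ ((j:ℕ):ℝ) := by exact_mod_cast h
        simp only [hgI]
        have := mul_le_mul_of_nonneg_right
          (show (2 * ((i:ℕ):ℝ) + 2) ≤ 2 * ((j:ℕ):ℝ) + 3/2 by linarith) hd.le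
        linarith
      · right
        have hcast : ((j:ℕ):ℝ) + 1 ≤ ((i:ℕ):ℝ) := by exact_mod_cast h
        simp only [hgI]
        have := mul_le_mul_of_nonneg_right
          (show (2 * ((j:ℕ):ℝ) + 2) ≤ 2 * ((i:ℕ):ℝ) + 3/2 by linarith) hd.le
        linarith
  have hpt : ∀ t : Fin N, (gI t).1 ∈ Icc (0:ℝ) (2 * Real.pi) ∧
      (gI t).2 ∈ Icc (0:ℝ) (2 * Real.pi) := by
    intro t
    obtain ⟨h0, h1, h2⟩ := hNon.1 t
    exact ⟨⟨h0, le_trans h1.le h2⟩, ⟨le_trans h0 h1.le, h2⟩⟩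
  have hgap : ∀ t : Fin N, ∀ m', (gI t).1 ∉ SS nn m' := by
    intro t
    have ht : (t:ℕ) + 1 < nn m := by have := t.isLt; omega
    exact gap_not_mem hnn ht
  have hmem : ∀ t : Fin N, (gI t).2 ∈ SS nn m := by
    intro t
    have ht : (t:ℕ) + 1 < nn m := by have := t.isLt; omega
    have h := tooth_start_mem hnn (m := m) (t := (t:ℕ) + 1) ht
    have e : cc m + 2 * (((t:ℕ) + 1 : ℕ):ℝ) * del nn m
        = cc m + (2 * ((t:ℕ):ℝ) + 2) * del nn m := by push_cast; ring
    rw [e] at h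
    exact h
  have haapos := aa_pos hΛpos m hn1
  have hval : ∀ i j : Fin N,
      |ff nn Λ (gI i).1 (gI j).1 - ff nn Λ (gI i).1 (gI j).2 -
        ff nn Λ (gI i).2 (gI j).1 + ff nn Λ (gI i).2 (gI j).2| = aa nn Λ m := by
    intro i j
    rw [ff_eq hnn (hpt i).1 (hpt j).1, ff_eq hnn (hpt i).1 (hpt j).2,
      ff_eq hnn (hpt i).2 (hpt j).1, ff_eq hnn (hpt i).2 (hpt j).2]
    rw [FF_zero_left (hgap i) _, FF_zero_left (hgap i) _,
      FF_zero_right _ (hgap j), FF_eq_of_mem hnn (hmem i) (hmem j)]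
    simp [abs_of_nonneg haapos.le]
  -- the harmonic sum
  set S : ℝ := ∑ k ∈ Finset.range N, 1 / ((k:ℝ) + 1) with hS
  have hlogS : Real.log (nn m) ≤ S := by
    have h := log_le_harm N
    have e : ((N:ℝ) + 1) = ((nn m : ℕ) : ℝ) := by exact_mod_cast hNsucc
    rw [e] at h
    exact h
  have hnR21 : (21:ℝ) ≤ (nn m : ℝ) := by exact_mod_cast h21 m
  have hlog3 : (3:ℝ) ≤ Real.log (nn m) :=
    le_trans three_le_log21 (Real.log_le_log (by norm_num) hnR21)
  have hgrid : 2 * ((m:ℝ) + 1) ≤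
      ∑ i : Fin N, ∑ j : Fin N,
        |ff nn Λ (gI i).1 (gI j).1 - ff nn Λ (gI i).1 (gI j).2 -
          ff nn Λ (gI i).2 (gI j).1 + ff nn Λ (gI i).2 (gI j).2| /
          ((((i:ℕ) + 1 : ℕ):ℝ) * (((j:ℕ) + 1 : ℕ):ℝ)) := by
    have hsum : (∑ i : Fin N, ∑ j : Fin N,
        |ff nn Λ (gI i).1 (gI j).1 - ff nn Λ (gI i).1 (gI j).2 -
          ff nn Λ (gI i).2 (gI j).1 + ff nn Λ (gI i).2 (gI j).2| /
          ((((i:ℕ) + 1 : ℕ):ℝ) * (((j:ℕ) + 1 : ℕ):ℝ)))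
        = aa nn Λ m * S * S := by
      have e1 : ∀ i j : Fin N,
          |ff nn Λ (gI i).1 (gI j).1 - ff nn Λ (gI i).1 (gI j).2 -
            ff nn Λ (gI i).2 (gI j).1 + ff nn Λ (gI i).2 (gI j).2| /
            ((((i:ℕ) + 1 : ℕ):ℝ) * (((j:ℕ) + 1 : ℕ):ℝ))
          = (aa nn Λ m * (1 / (((i:ℕ):ℝ) + 1))) * (1 / (((j:ℕ):ℝ) + 1)) := by
        intro i j
        rw [hval i j]
        push_cast
        field_simp
      rw [Finset.sum_congr rfl (fun i _ => Finset.sum_congr rfl (fun j _ => e1 i j))]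
      have e2 : ∀ i : Fin N, (∑ j : Fin N, (aa nn Λ m * (1 / (((i:ℕ):ℝ) + 1))) * (1 / (((j:ℕ):ℝ) + 1)))
          = (aa nn Λ m * (1 / (((i:ℕ):ℝ) + 1))) * S := by
        intro i
        rw [← Finset.mul_sum]
        congr 1
        rw [hS, ← Fin.sum_univ_eq_sum_range (fun k => 1 / ((k:ℝ) + 1)) N]
      rw [Finset.sum_congr rfl (fun i _ => e2 i)]
      rw [← Finset.sum_mul, ← Finset.mul_sum]
      have e3 : (∑ i : Fin N, 1 / (((i:ℕ):ℝ) + 1)) = S := by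
        rw [hS, ← Fin.sum_univ_eq_sum_range (fun k => 1 / ((k:ℝ) + 1)) N]
      rw [e3]
    rw [hsum]
    have hge := aa_log_ge hΛpos hΛmono hΛdec m (h21 m) (hbig m)
    have h0 : (0:ℝ) ≤ Real.log (nn m) := by linarith
    have hsq : Real.log (nn m) ^ 2 ≤ S * S := by nlinarith
    have h2 : aa nn Λ m * Real.log (nn m) ^ 2 ≤ aa nn Λ m * (S * S) :=
      mul_le_mul_of_nonneg_left hsq haapos.le
    nlinarith [hge, h2]
  -- conclude
  refine le_trans ?_ (le_iSup_of_le N (le_iSup_of_le N (le_iSup_of_le gI (le_iSup_of_le gI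
    (le_iSup_of_le hNon (le_iSup_of_le hNon le_rfl))))))
  rw [← ENNReal.ofReal_coe_nnreal]
  apply ENNReal.ofReal_le_ofReal
  calc (r:ℝ) ≤ (m:ℝ) := hm
    _ ≤ 2 * ((m:ℝ) + 1) := by linarith [Nat.cast_nonneg (α := ℝ) m]
    _ ≤ _ := by
        refine le_trans hgrid (le_of_eq ?_)
        push_cast
        rfl

end grid

end
end Stmt6Aux

/-- if `λ_n/n ↓ 0` and `limsup λ_n·log n / n = +∞`, then `Λ#BV ⊄ HBV`. -/
theorem stmt6 (Λ : ℕ → ℝ)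
    (hpos : ∀ n, 1 ≤ n → 0 < Λ n) (hmono : ∀ n, 1 ≤ n → Λ n ≤ Λ (n + 1))
    (htop : Tendsto Λ atTop atTop)
    (hdec : ∀ n, 1 ≤ n → Λ (n + 1) / ((n : ℝ) + 1) ≤ Λ n / (n : ℝ))
    (hzero : Tendsto (fun n : ℕ => Λ n / (n : ℝ)) atTop (nhds 0))
    (hlimsup : ∀ M : ℝ, ∃ᶠ n : ℕ in atTop, M < Λ n * Real.log n / n) :
    ∃ f : ℝ → ℝ → ℝ, Periodic2 f ∧
      LamSharpV1 Λ f + LamSharpV2 Λ f ≠ ⊤ ∧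
      HarmonicV f = ⊤ := by
  classical
  have hex : ∀ m : ℕ, ∃ N : ℕ, 21 ≤ N ∧ 16 * ((m:ℝ) + 1) ^ 3 < Λ N * Real.log N / N := by
    intro m
    obtain ⟨N, h1, h2⟩ :=
      ((hlimsup (16 * ((m:ℝ) + 1) ^ 3)).and_eventually (eventually_ge_atTop 21)).exists
    exact ⟨N, h2, h1⟩
  set nn : ℕ → ℕ := fun m => (hex m).choose with hnn_def
  have h21 : ∀ m, 21 ≤ nn m := fun m => (hex m).choose_spec.1
  have hbig : ∀ m : ℕ, 16 * ((m:ℝ) + 1) ^ 3 ≤ Λ (nn m) * Real.log (nn m) / (nn m) :=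
    fun m => ((hex m).choose_spec.2).le
  have hnn1 : ∀ m, 1 ≤ nn m := fun m => le_trans (by norm_num) (h21 m)
  refine ⟨Stmt6Aux.ff nn Λ, Stmt6Aux.ff_periodic2 hnn1, ?_, ?_⟩
  · have h1 : LamSharpV1 Λ (Stmt6Aux.ff nn Λ) ≤ ENNReal.ofReal 2 := by
      rw [LamSharpV1]
      refine iSup_le fun n => iSup_le fun I => iSup_le fun y => iSup_le fun hI =>
        iSup_le fun hy => ?_
      exact ENNReal.ofReal_le_ofReal (Stmt6Aux.sharp_sum_le hnn1 hpos hmono n I y hI hy)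
    have h2 : LamSharpV2 Λ (Stmt6Aux.ff nn Λ) ≤ ENNReal.ofReal 2 := by
      rw [LamSharpV2]
      refine iSup_le fun n => iSup_le fun J => iSup_le fun x => iSup_le fun hJ =>
        iSup_le fun hx => ?_
      apply ENNReal.ofReal_le_ofReal
      have hsymm : ∀ j : Fin n,
          |Stmt6Aux.ff nn Λ (x j) (J j).2 - Stmt6Aux.ff nn Λ (x j) (J j).1| / Λ ((j:ℕ) + 1)
          = |Stmt6Aux.ff nn Λ (J j).2 (x j) - Stmt6Aux.ff nn Λ (J j).1 (x j)| / Λ ((j:ℕ) + 1) := by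
        intro j
        rw [Stmt6Aux.ff_symm hnn1 (x j) (J j).2, Stmt6Aux.ff_symm hnn1 (x j) (J j).1]
      rw [Finset.sum_congr rfl (fun j _ => hsymm j)]
      exact Stmt6Aux.sharp_sum_le hnn1 hpos hmono n J x hJ hx
    exact ENNReal.add_ne_top.mpr
      ⟨ne_top_of_le_ne_top ENNReal.ofReal_ne_top h1, ne_top_of_le_ne_top ENNReal.ofReal_ne_top h2⟩
  · have h3 := Stmt6Aux.lamV12_top hnn1 hpos hmono hdec h21 hbig
    rw [HarmonicV, h3]
    simp
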